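/- Let n ≥ 2 and let K, L ⊆ ℤⁿ be rectangles (products of finite integer intervals, each of length ≥ 1). If ∂K ∩ ∂L = ∅ and K ∩ L ≠ ∅, then K ⊆ L or L ⊆ K. Consequently, if the boundaries of K and L are at distance greater than 0 from each other (in particular disjoint), then either K ∩ L = ∅, or K ⊆ L, or L ⊆ K. -/
import Mathlib


/-- The boundary of a subset of `ℤⁿ`: points of `A` at ℓ¹-distance 1 from the complement. -/
def gridBoundary (n : ℕ) (A : Set (Fin n → ℤ)) : Set (Fin n → ℤ) :=
  {x | x ∈ A ∧ ∃ y, y ∉ A ∧ (∑ i, |x i - y i|) = 1}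

lemma mem_gridBoundary_of_endpoint {n : ℕ} {a b x : Fin n → ℤ}
    (hx : ∀ i, a i ≤ x i ∧ x i ≤ b i) {j : Fin n} (hj : x j = a j ∨ x j = b j) :
    x ∈ gridBoundary n {x | ∀ i, a i ≤ x i ∧ x i ≤ b i} := by
  refine ⟨hx, ?_⟩
  rcases hj with hj | hj
  · refine ⟨Function.update x j (a j - 1), ?_, ?_⟩
    · intro h
      have := (h j).1
      simp only [Function.update_self] at this
      omega
    · rw [Finset.sum_eq_single j]
      · rw [Function.update_self, show x j - (a j - 1) = 1 by omega, abs_one]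
      · intro t _ ht
        simp [Function.update_of_ne ht]
      · simp
  · refine ⟨Function.update x j (b j + 1), ?_, ?_⟩
    · intro h
      have := (h j).2
      simp only [Function.update_self] at this
      omega
    · rw [Finset.sum_eq_single j]
      · rw [Function.update_self, show x j - (b j + 1) = -1 by omega, abs_neg, abs_one]
      · intro t _ ht
        simp [Function.update_of_ne ht]
      · simp

lemma boundary_point {n : ℕ} {a b c d : Fin n → ℤ}
    (h : ∀ k, max (a k) (c k) ≤ min (b k) (d k))
    {i j : Fin n} (hij : i ≠ j) {v w : ℤ}
    (hv1 : a i ≤ v) (hv2 : v ≤ b i) (hv3 : v = c i ∨ v = d i) (hv4 : c i ≤ v) (hv5 : v ≤ d i)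
    (hw1 : a j ≤ w) (hw2 : w ≤ b j) (hw3 : w = a j ∨ w = b j) (hw4 : c j ≤ w) (hw5 : w ≤ d j) :
    (gridBoundary n {x | ∀ k, a k ≤ x k ∧ x k ≤ b k} ∩
      gridBoundary n {x | ∀ k, c k ≤ x k ∧ x k ≤ d k}).Nonempty := by
  classical
  set x : Fin n → ℤ := fun t => if t = i then v else if t = j then w else max (a t) (c t)
    with hxdef
  have hxi : x i = v := by simp [hxdef]
  have hxj : x j = w := by simp [hxdef, hij.symm]
  have hxK : ∀ k, a k ≤ x k ∧ x k ≤ b k := by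
    intro k
    by_cases h1 : k = i
    · subst h1; rw [hxi]; exact ⟨hv1, hv2⟩
    by_cases h2 : k = j
    · subst h2; rw [hxj]; exact ⟨hw1, hw2⟩
    · have hk := h k
      simp only [hxdef, h1, h2, if_false]
      omega
  have hxL : ∀ k, c k ≤ x k ∧ x k ≤ d k := by
    intro k
    by_cases h1 : k = i
    · subst h1; rw [hxi]; exact ⟨hv4, hv5⟩
    by_cases h2 : k = j
    · subst h2; rw [hxj]; exact ⟨hw4, hw5⟩
    · have hk := h k
      simp only [hxdef, h1, h2, if_false]
      omega
  refine ⟨x, mem_gridBoundary_of_endpoint hxK (j := j) ?_,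
    mem_gridBoundary_of_endpoint hxL (j := i) ?_⟩
  · rw [hxj]; exact hw3
  · rw [hxi]; exact hv3

/-- For `n ≥ 2` and rectangles `K, L ⊆ ℤⁿ` (products of finite integer
intervals of length ≥ 1), if `∂K ∩ ∂L = ∅` and `K ∩ L ≠ ∅` then `K ⊆ L` or `L ⊆ K`;
consequently if `∂K ∩ ∂L = ∅` then `K ∩ L = ∅`, or `K ⊆ L`, or `L ⊆ K`. -/
theorem stmt5 (n : ℕ) (hn : 2 ≤ n) (K L : Set (Fin n → ℤ))
    (hK : ∃ a b : Fin n → ℤ, (∀ i, a i + 1 ≤ b i) ∧ K = {x | ∀ i, a i ≤ x i ∧ x i ≤ b i})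
    (hL : ∃ a b : Fin n → ℤ, (∀ i, a i + 1 ≤ b i) ∧ L = {x | ∀ i, a i ≤ x i ∧ x i ≤ b i})
    (hbd : gridBoundary n K ∩ gridBoundary n L = ∅) :
    ((K ∩ L).Nonempty → K ⊆ L ∨ L ⊆ K) ∧ (K ∩ L = ∅ ∨ K ⊆ L ∨ L ⊆ K) := by
  obtain ⟨a, b, hab, rfl⟩ := hK
  obtain ⟨c, d, hcd, rfl⟩ := hL
  have main : ({x : Fin n → ℤ | ∀ i, a i ≤ x i ∧ x i ≤ b i} ∩
      {x | ∀ i, c i ≤ x i ∧ x i ≤ d i}).Nonempty →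
      {x : Fin n → ℤ | ∀ i, a i ≤ x i ∧ x i ≤ b i} ⊆ {x | ∀ i, c i ≤ x i ∧ x i ≤ d i} ∨
      {x : Fin n → ℤ | ∀ i, c i ≤ x i ∧ x i ≤ d i} ⊆ {x | ∀ i, a i ≤ x i ∧ x i ≤ b i} := by
    rintro ⟨z, hzK, hzL⟩
    by_contra hcon
    push_neg at hcon
    obtain ⟨hKL, hLK⟩ := hcon
    have hI : ∀ k, max (a k) (c k) ≤ min (b k) (d k) := by
      intro k
      have h1 := hzK k
      have h2 := hzL k
      omega
    -- some coordinate where the boundary of L sticks inside K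
    have h1 : ∃ i, a i < c i ∨ d i < b i := by
      by_contra h
      push_neg at h
      exact hKL fun x hx i => ⟨(h i).1.trans (hx i).1, (hx i).2.trans (h i).2⟩
    have h2 : ∃ j, c j < a j ∨ b j < d j := by
      by_contra h
      push_neg at h
      exact hLK fun x hx i => ⟨(h i).1.trans (hx i).1, (hx i).2.trans (h i).2⟩
    obtain ⟨i, hi⟩ := h1
    obtain ⟨j, hj⟩ := h2
    -- L-endpoint value at i inside both intervals
    obtain ⟨v, hv1, hv2, hv3, hv4, hv5⟩ :
        ∃ v, a i ≤ v ∧ v ≤ b i ∧ (v = c i ∨ v = d i) ∧ c i ≤ v ∧ v ≤ d i := by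
      have := hI i; have := hab i; have := hcd i
      rcases hi with hi | hi
      · exact ⟨c i, by omega, by omega, Or.inl rfl, le_refl _, by omega⟩
      · exact ⟨d i, by omega, by omega, Or.inr rfl, by omega, le_refl _⟩
    -- K-endpoint value at j inside both intervals
    obtain ⟨w, hw1, hw2, hw3, hw4, hw5⟩ :
        ∃ w, a j ≤ w ∧ w ≤ b j ∧ (w = a j ∨ w = b j) ∧ c j ≤ w ∧ w ≤ d j := by
      have := hI j; have := hab j; have := hcd j
      rcases hj with hj | hj
      · exact ⟨a j, le_refl _, by omega, Or.inl rfl, by omega, by omega⟩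
      · exact ⟨b j, by omega, le_refl _, Or.inr rfl, by omega, by omega⟩
    have hne : (gridBoundary n {x : Fin n → ℤ | ∀ k, a k ≤ x k ∧ x k ≤ b k} ∩
        gridBoundary n {x | ∀ k, c k ≤ x k ∧ x k ≤ d k}).Nonempty := by
      by_cases hij : i = j
      · subst hij
        have : Nontrivial (Fin n) := Fin.nontrivial_iff_two_le.mpr hn
        obtain ⟨k, hk⟩ := exists_ne i
        have hIk := hI k
        have habk := hab k
        have hcdk := hcd k
        by_cases hac : c k ≤ a k
        · exact boundary_point hI (Ne.symm hk) hv1 hv2 hv3 hv4 hv5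
            (le_refl _) (by omega) (Or.inl rfl) hac (by omega)
        · exact boundary_point hI hk (by omega) (by omega) (Or.inl rfl) (le_refl _)
            (by omega) hw1 hw2 hw3 hw4 hw5
      · exact boundary_point hI hij hv1 hv2 hv3 hv4 hv5 hw1 hw2 hw3 hw4 hw5
    rw [hbd] at hne
    exact Set.not_nonempty_empty hne
  refine ⟨main, ?_⟩
  rcases Set.eq_empty_or_nonempty
      ({x : Fin n → ℤ | ∀ i, a i ≤ x i ∧ x i ≤ b i} ∩ {x | ∀ i, c i ≤ x i ∧ x i ≤ d i}) with
    h | h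
  · exact Or.inl h
  · exact Or.inr (main h)
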